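/- Let n ≥ 2 and 1 ≤ k ≤ n − 1. Then the set P_k of rank-k Hermitian projections spans the real vector space B_H of all n×n complex Hermitian matrices: every X ∈ B_H is a real linear combination of rank-k Hermitian projections. -/

import Mathlib

open Matrix

noncomputable section

/-- `BH n` is the real vector space of `n × n` complex Hermitian (self-adjoint) matrices. -/
abbrev BH (n : ℕ) := selfAdjoint (Matrix (Fin n) (Fin n) ℂ)

/-- `projSet n k` is the set of rank-`k` Hermitian projections, viewed inside `BH n`. -/
def projSet (n k : ℕ) : Set (BH n) :=
  {P | (P : Matrix (Fin n) (Fin n) ℂ) * (P : Matrix (Fin n) (Fin n) ℂ) = (P : Matrix (Fin n) (Fin n) ℂ)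
    ∧ (P : Matrix (Fin n) (Fin n) ℂ).rank = k}

namespace Stmt5Aux

variable {n : ℕ}

/-- Indicator vector of a finite set of indices. -/
def ind (S : Finset (Fin n)) : Fin n → ℝ := fun i => if i ∈ S then 1 else 0

lemma conj_selfAdjoint (U : Matrix.unitaryGroup (Fin n) ℂ) (d : Fin n → ℝ) :
    ((U : Matrix (Fin n) (Fin n) ℂ) * diagonal (fun i => (d i : ℂ)) *
      star (U : Matrix (Fin n) (Fin n) ℂ)) ∈ selfAdjoint (Matrix (Fin n) (Fin n) ℂ) := by
  have hD : (diagonal (fun i => (d i : ℂ))).IsHermitian := by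
    rw [Matrix.isHermitian_diagonal_iff]
    intro i
    show star ((d i : ℂ)) = (d i : ℂ)
    simp [Complex.star_def, Complex.conj_ofReal]
  have h := Matrix.isHermitian_mul_mul_conjTranspose (U : Matrix (Fin n) (Fin n) ℂ) hD
  rw [selfAdjoint.mem_iff]
  rw [Matrix.star_eq_conjTranspose]
  exact h

/-- The real-linear map sending `d` to `U diag(d) U*` inside `BH n`. -/
def conjMap (U : Matrix.unitaryGroup (Fin n) ℂ) : (Fin n → ℝ) →ₗ[ℝ] BH n where
  toFun d := ⟨(U : Matrix (Fin n) (Fin n) ℂ) * diagonal (fun i => (d i : ℂ)) *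
      star (U : Matrix (Fin n) (Fin n) ℂ), conj_selfAdjoint U d⟩
  map_add' d e := by
    ext1
    have hfun : (fun i => (((d + e) i : ℝ) : ℂ)) =
        fun i => (d i : ℂ) + (e i : ℂ) := by
      funext i; simp
    show (U : Matrix (Fin n) (Fin n) ℂ) * diagonal (fun i => (((d + e) i : ℝ) : ℂ)) *
        star (U : Matrix (Fin n) (Fin n) ℂ) =
        (U : Matrix (Fin n) (Fin n) ℂ) * diagonal (fun i => (d i : ℂ)) *
        star (U : Matrix (Fin n) (Fin n) ℂ) +
        (U : Matrix (Fin n) (Fin n) ℂ) * diagonal (fun i => (e i : ℂ)) *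
        star (U : Matrix (Fin n) (Fin n) ℂ)
    rw [hfun, ← diagonal_add]
    noncomm_ring
  map_smul' r d := by
    ext1
    have hfun : (fun i => (((r • d) i : ℝ) : ℂ)) = (r : ℂ) • fun i => (d i : ℂ) := by
      funext i
      simp [Complex.ofReal_mul]
    show (U : Matrix (Fin n) (Fin n) ℂ) * diagonal (fun i => (((r • d) i : ℝ) : ℂ)) *
        star (U : Matrix (Fin n) (Fin n) ℂ) =
        r • ((U : Matrix (Fin n) (Fin n) ℂ) * diagonal (fun i => (d i : ℂ)) *
        star (U : Matrix (Fin n) (Fin n) ℂ))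
    rw [hfun, diagonal_smul,
      show ((r : ℂ)) = r • (1 : ℂ) by simp [Complex.real_smul], smul_assoc, one_smul]
    simp [Matrix.mul_smul, Matrix.smul_mul]

lemma conjMap_ind_mem (k : ℕ) (U : Matrix.unitaryGroup (Fin n) ℂ) (S : Finset (Fin n))
    (hS : S.card = k) : conjMap U (ind S) ∈ projSet n k := by
  have hUU : star (U : Matrix (Fin n) (Fin n) ℂ) * (U : Matrix (Fin n) (Fin n) ℂ) = 1 :=
    U.2.1
  have hDD : diagonal (fun i => ((ind S) i : ℂ)) * diagonal (fun i => ((ind S) i : ℂ)) =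
      diagonal (fun i => ((ind S) i : ℂ)) := by
    rw [diagonal_mul_diagonal]
    refine congrArg diagonal ?_
    funext i
    simp only [Pi.mul_apply, ind]
    split <;> simp
  constructor
  · show ((U : Matrix (Fin n) (Fin n) ℂ) * diagonal (fun i => ((ind S) i : ℂ)) *
      star (U : Matrix (Fin n) (Fin n) ℂ)) * ((U : Matrix (Fin n) (Fin n) ℂ) *
      diagonal (fun i => ((ind S) i : ℂ)) * star (U : Matrix (Fin n) (Fin n) ℂ)) = _
    have h1 : ((U : Matrix (Fin n) (Fin n) ℂ) * diagonal (fun i => ((ind S) i : ℂ)) *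
        star (U : Matrix (Fin n) (Fin n) ℂ)) * ((U : Matrix (Fin n) (Fin n) ℂ) *
        diagonal (fun i => ((ind S) i : ℂ)) * star (U : Matrix (Fin n) (Fin n) ℂ)) =
        (U : Matrix (Fin n) (Fin n) ℂ) * (diagonal (fun i => ((ind S) i : ℂ)) *
        ((star (U : Matrix (Fin n) (Fin n) ℂ) * (U : Matrix (Fin n) (Fin n) ℂ)) *
        diagonal (fun i => ((ind S) i : ℂ)))) * star (U : Matrix (Fin n) (Fin n) ℂ) := by
      noncomm_ring
    rw [h1, hUU, one_mul, hDD]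
    rfl
  · show ((U : Matrix (Fin n) (Fin n) ℂ) * diagonal (fun i => ((ind S) i : ℂ)) *
      star (U : Matrix (Fin n) (Fin n) ℂ)).rank = k
    have hdetU : IsUnit (U : Matrix (Fin n) (Fin n) ℂ).det := by
      have h := congrArg Matrix.det hUU
      rw [Matrix.det_mul, Matrix.det_one] at h
      exact IsUnit.of_mul_eq_one _ ((mul_comm _ _).trans h)
    have hdetsU : IsUnit (star (U : Matrix (Fin n) (Fin n) ℂ)).det := by
      have h := congrArg Matrix.det hUU
      rw [Matrix.det_mul, Matrix.det_one] at h
      exact IsUnit.of_mul_eq_one _ h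
    rw [Matrix.rank_mul_eq_left_of_isUnit_det _ _ hdetsU,
      Matrix.rank_mul_eq_right_of_isUnit_det _ _ hdetU, Matrix.rank_diagonal]
    rw [Fintype.card_subtype]
    rw [show (Finset.univ.filter fun i => ((ind S) i : ℂ) ≠ 0) = S from ?_]
    · exact hS
    · rw [← Finset.filter_univ_mem S]
      apply Finset.filter_congr
      intro i _
      simp only [ind]
      split <;> simp_all

lemma single_mem_span (k : ℕ) (hk1 : 1 ≤ k) (hkn : k ≤ n - 1) (i : Fin n) :
    (Pi.single i (1 : ℝ) : Fin n → ℝ) ∈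
      Submodule.span ℝ {v : Fin n → ℝ | ∃ S : Finset (Fin n), S.card = k ∧ v = ind S} := by
  have hcard : k ≤ (Finset.univ.erase i).card := by
    rw [Finset.card_erase_of_mem (Finset.mem_univ i), Finset.card_univ, Fintype.card_fin]
    exact hkn
  obtain ⟨T, hTsub, hTcard⟩ := Finset.exists_subset_card_eq hcard
  have hiT : i ∉ T := fun h => (Finset.mem_erase.mp (hTsub h)).1 rfl
  have hk0 : (k : ℝ) ≠ 0 := Nat.cast_ne_zero.mpr (by omega)
  have key : (k : ℝ) • (Pi.single i (1 : ℝ) : Fin n → ℝ) =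
      (∑ j ∈ T, ind (insert i (T.erase j))) - ((k : ℝ) - 1) • ind T := by
    funext m
    simp only [Pi.smul_apply, Pi.sub_apply, Finset.sum_apply, smul_eq_mul]
    by_cases hmi : m = i
    · subst hmi
      have h1 : ∀ j ∈ T, ind (insert m (T.erase j)) m = 1 := by
        intro j _
        simp [ind, Finset.mem_insert]
      rw [Finset.sum_congr rfl h1, Finset.sum_const, hTcard]
      simp [ind, hiT, Pi.single_eq_same]
    · rw [Pi.single_eq_of_ne hmi]
      by_cases hmT : m ∈ T
      · have h1 : ∀ j ∈ T, ind (insert i (T.erase j)) m = if j ≠ m then 1 else 0 := by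
          intro j _
          simp only [ind, Finset.mem_insert, Finset.mem_erase]
          by_cases hjm : j = m
          · subst hjm; simp [hmi]
          · simp [hmi, hmT, Ne.symm hjm, hjm]
        rw [Finset.sum_congr rfl h1, Finset.sum_ite, Finset.sum_const, Finset.sum_const]
        rw [Finset.filter_ne' T m, Finset.card_erase_of_mem hmT, hTcard]
        have hcast : ((k - 1 : ℕ) : ℝ) = (k : ℝ) - 1 := by
          push_cast [Nat.cast_sub hk1]
          ring
        simp [ind, hmT, hcast]
      · have h1 : ∀ j ∈ T, ind (insert i (T.erase j)) m = 0 := by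
          intro j _
          simp [ind, Finset.mem_insert, Finset.mem_erase, hmi, hmT]
        rw [Finset.sum_congr rfl h1, Finset.sum_const]
        simp [ind, hmT]
  have hmem : (∑ j ∈ T, ind (insert i (T.erase j))) - ((k : ℝ) - 1) • ind T ∈
      Submodule.span ℝ {v : Fin n → ℝ | ∃ S : Finset (Fin n), S.card = k ∧ v = ind S} := by
    apply Submodule.sub_mem
    · apply Submodule.sum_mem
      intro j hj
      apply Submodule.subset_span
      refine ⟨insert i (T.erase j), ?_, rfl⟩
      rw [Finset.card_insert_of_notMem (fun h => hiT (Finset.mem_of_mem_erase h)),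
        Finset.card_erase_of_mem hj, hTcard]
      omega
    · exact Submodule.smul_mem _ _ (Submodule.subset_span ⟨T, hTcard, rfl⟩)
  have h2 := Submodule.smul_mem
    (Submodule.span ℝ {v : Fin n → ℝ | ∃ S : Finset (Fin n), S.card = k ∧ v = ind S})
    (k : ℝ)⁻¹ (key ▸ hmem)
  rwa [inv_smul_smul₀ hk0] at h2

lemma ind_span (k : ℕ) (hk1 : 1 ≤ k) (hkn : k ≤ n - 1) :
    Submodule.span ℝ {v : Fin n → ℝ | ∃ S : Finset (Fin n), S.card = k ∧ v = ind S} = ⊤ := by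
  rw [eq_top_iff, ← (Pi.basisFun ℝ (Fin n)).span_eq, Submodule.span_le]
  rintro _ ⟨j, rfl⟩
  rw [Pi.basisFun_apply]
  exact single_mem_span k hk1 hkn j

end Stmt5Aux

open Stmt5Aux in
set_option linter.unusedVariables false in
theorem stmt_5 (n k : ℕ) (hn : 2 ≤ n) (hk1 : 1 ≤ k) (hkn : k ≤ n - 1) :
    Submodule.span ℝ (projSet n k) = (⊤ : Submodule ℝ (BH n)) := by
  rw [eq_top_iff]
  intro X _
  have hX : (X : Matrix (Fin n) (Fin n) ℂ).IsHermitian := X.2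
  set U := Matrix.IsHermitian.eigenvectorUnitary hX with hU
  have hXeq : X = conjMap U hX.eigenvalues := by
    ext1
    show (X : Matrix (Fin n) (Fin n) ℂ) = _
    conv_lhs => rw [hX.spectral_theorem]
    rfl
  rw [hXeq]
  have hev : hX.eigenvalues ∈
      Submodule.span ℝ {v : Fin n → ℝ | ∃ S : Finset (Fin n), S.card = k ∧ v = ind S} := by
    rw [ind_span k hk1 hkn]; trivial
  have h2 := Submodule.apply_mem_span_image_of_mem_span (conjMap U) hev
  refine Submodule.span_le.mpr ?_ h2
  rintro _ ⟨v, ⟨S, hS, rfl⟩, rfl⟩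
  exact Submodule.subset_span (conjMap_ind_mem k U S hS)
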